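/- On a (β,φ)-Kenmotsu quadratic metric manifold, i.e. an almost quadratic metric φ-manifold satisfying (∇_X φ)Y = β{g(X,φY)ξ + η(Y)φX}, the covariant derivative of ξ satisfies ∇_X ξ = −β(X − η(X)ξ). -/

import Mathlib

/-- On a `(β,φ)`-Kenmotsu quadratic metric manifold — an almost quadratic
metric φ-manifold (`φξ = 0`, `η(ξ) = 1`, `η = g(·,ξ)`, `φ² = aφ + b(I − η⊗ξ)`, `b ≠ 0`,
`g(φX,Y) = g(X,φY)`) whose Levi-Civita connection `∇` satisfies
`(∇_X φ)Y = β{g(X,φY)ξ + η(Y)φX}` — one has `∇_X ξ = −β(X − η(X)ξ)`.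
Here `A` is the ℝ-algebra of smooth functions, `V` the `A`-module of vector fields,
`D X` is the derivation action of the vector field `X` on functions, and `∇` satisfies
the Levi-Civita axioms (Leibniz rule, metric compatibility). -/
theorem Kenmotsu_quadratic_nabla_xi
    {A V : Type*} [CommRing A] [Algebra ℝ A]
    [AddCommGroup V] [Module A V] [Module ℝ V] [IsScalarTower ℝ A V]
    (g : V →ₗ[A] V →ₗ[A] A)
    (hgsym : ∀ X Y, g X Y = g Y X)
    (D : V → A → A)
    (nabla : V → V → V)
    (hnablaAdd : ∀ X Y Z, nabla X (Y + Z) = nabla X Y + nabla X Z)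
    (hLeibniz : ∀ X (c : A) Y, nabla X (c • Y) = D X c • Y + c • nabla X Y)
    (hD1 : ∀ X, D X 1 = 0)
    (hmetric : ∀ X Y Z, D X (g Y Z) = g (nabla X Y) Z + g Y (nabla X Z))
    (φ : V →ₗ[A] V) (ξ : V) (η : V → A) (a b : ℝ) (hb : b ≠ 0)
    (hη : ∀ X, η X = g X ξ)
    (hφξ : φ ξ = 0) (hηξ : η ξ = 1)
    (hφ2 : ∀ X, φ (φ X) = a • φ X + b • (X - η X • ξ))
    (hcompat : ∀ X Y, g (φ X) Y = g X (φ Y))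
    (β : A)
    (hKenmotsu : ∀ X Y, nabla X (φ Y) - φ (nabla X Y) = (β * g X (φ Y)) • ξ + (β * η Y) • φ X) :
    ∀ X, nabla X ξ = -(β • (X - η X • ξ)) := by
  intro X
  have h0 : nabla X (0 : V) = 0 := by
    have h := hnablaAdd X 0 0
    rw [add_zero] at h
    exact right_eq_add.mp h
  -- Step 1: φ (∇_X ξ) = -(β • φ X)
  have h1 : φ (nabla X ξ) = -(β • φ X) := by
    have h := hKenmotsu X ξ
    rw [hφξ, h0, hηξ, mul_one] at h
    simp only [map_zero, mul_zero, zero_smul, zero_add, zero_sub] at h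
    exact neg_eq_iff_eq_neg.mp h
  -- Step 2: η (∇_X ξ) = 0
  have hgξξ : g ξ ξ = 1 := (hη ξ).symm.trans hηξ
  have hm := hmetric X ξ ξ
  rw [hgξξ, hD1, hgsym ξ (nabla X ξ)] at hm
  have hx : g (nabla X ξ) ξ = 0 := by
    have h2 : (2 : ℝ) • g (nabla X ξ) ξ = 0 := by
      rw [two_smul]; exact hm.symm
    calc g (nabla X ξ) ξ = (1/2 : ℝ) • ((2 : ℝ) • g (nabla X ξ) ξ) := by
            rw [smul_smul]; norm_num
      _ = 0 := by rw [h2, smul_zero]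
  have hηn : η (nabla X ξ) = 0 := by rw [hη]; exact hx
  -- Step 3: apply φ² identity
  have key : b • nabla X ξ = b • (-(β • (X - η X • ξ))) := by
    have h2 := hφ2 (nabla X ξ)
    rw [hηn, zero_smul, sub_zero, h1, map_neg, map_smul, hφ2 X, smul_add,
        (smul_comm a β (φ X)).symm, (smul_comm b β (X - η X • ξ)).symm,
        smul_neg, neg_add] at h2
    have h3 := add_left_cancel h2
    rw [← h3, smul_neg]
  exact smul_right_injective V hb key
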